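/- Let Φ be the cumulative distribution function of the standard Gaussian N(0,1) and g : (0,1) → ℝ its inverse. Fix B > 0 and Δ > 0, and define U*(x) = x · Φ(g(B/x) + Δ) for real x > B. Then: (i) U*(x) → ∞ as x → ∞; and (ii) for every ε > 0, U*(x)/x^ε → 0 as x → ∞. That is, the exact finite-horizon classifier utility ceiling U*(N,B) = N · TPR_NP(B/N) is unbounded but subpolynomial — it is o(N^ε) for every ε > 0 — in contrast to the verifier's linear Θ(N) utility growth. -/

import Mathlib

open MeasureTheory ProbabilityTheory
open scoped ENNReal NNReal

namespace CeilingAux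

open Real Filter Set

/-- standard gaussian density (up to the precise formula). -/
noncomputable def phi (s : ℝ) : ℝ := (Real.sqrt (2 * Real.pi))⁻¹ * Real.exp (-s ^ 2 / 2)

lemma phi_pos (s : ℝ) : 0 < phi s := by
  have h2π : (0:ℝ) < 2 * Real.pi := by positivity
  exact mul_pos (inv_pos.mpr (Real.sqrt_pos.mpr h2π)) (Real.exp_pos _)

lemma pdf_eq_phi (x : ℝ) : gaussianPDFReal 0 1 x = phi x := by
  simp [gaussianPDFReal, phi]

lemma phi_le_exp (s : ℝ) : phi s ≤ Real.exp (-s ^ 2 / 2) := by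
  have h1 : (1:ℝ) ≤ Real.sqrt (2 * Real.pi) := by
    rw [show (1:ℝ) = Real.sqrt 1 by simp]
    exact Real.sqrt_le_sqrt (by nlinarith [Real.pi_gt_three])
  have := Real.exp_pos (-s ^ 2 / 2)
  calc phi s ≤ 1 * Real.exp (-s ^ 2 / 2) := by
        apply mul_le_mul_of_nonneg_right _ this.le
        exact inv_le_one_of_one_le₀ h1
    _ = _ := one_mul _

lemma phi_integrableOn' (s : Set ℝ) : MeasureTheory.IntegrableOn phi s := by
  have := integrable_gaussianPDFReal 0 1
  simp only [funext pdf_eq_phi] at this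
  exact this.integrableOn

lemma phi_shift (t d : ℝ) : phi (t + d) = phi t * Real.exp (-(t * d) - d ^ 2 / 2) := by
  unfold phi
  rw [mul_assoc, ← Real.exp_add]
  ring_nf

section Phi

variable {Φ : ℝ → ℝ} (hΦ : ∀ z : ℝ, Φ z = ((gaussianReal 0 1) (Set.Iic z)).toReal)
include hΦ

lemma Phi_eq (z : ℝ) : Φ z = ∫ x in Set.Iic z, phi x := by
  rw [hΦ z, gaussianReal_apply_eq_integral 0 one_ne_zero,
    ENNReal.toReal_ofReal (setIntegral_nonneg measurableSet_Iic
      (fun x _ => gaussianPDFReal_nonneg _ _ _))]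
  exact setIntegral_congr_fun measurableSet_Iic fun x _ => pdf_eq_phi x

lemma Phi_nonneg (z : ℝ) : 0 ≤ Φ z := by rw [hΦ]; exact ENNReal.toReal_nonneg

lemma Phi_mono {a b : ℝ} (h : a ≤ b) : Φ a ≤ Φ b := by
  rw [hΦ, hΦ]
  exact ENNReal.toReal_mono (measure_ne_top _ _) (measure_mono (Set.Iic_subset_Iic.mpr h))

lemma Phi_le_one (z : ℝ) : Φ z ≤ 1 := by
  rw [hΦ]
  exact ENNReal.toReal_le_of_le_ofReal one_pos.le (by simpa using prob_le_one)

lemma Phi_sub {a b : ℝ} (h : a ≤ b) : Φ b - Φ a = ∫ x in Set.Ioc a b, phi x := by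
  rw [Phi_eq hΦ, Phi_eq hΦ, ← Set.Iic_union_Ioc_eq_Iic h,
    setIntegral_union (Set.Iic_disjoint_Ioc le_rfl) measurableSet_Ioc
      (phi_integrableOn' _) (phi_integrableOn' _)]
  ring

lemma Phi_gap {a b : ℝ} (h : a ≤ b) (hb : b ≤ 0) : (b - a) * phi a ≤ Φ b - Φ a := by
  rw [Phi_sub hΦ h]
  have hmono : ∀ x ∈ Set.Ioc a b, phi a ≤ phi x := by
    intro x hx
    have hx2 : x ^ 2 ≤ a ^ 2 := by nlinarith [hx.1.le, hx.2]
    unfold phi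
    have : Real.exp (-a ^ 2 / 2) ≤ Real.exp (-x ^ 2 / 2) := by
      apply Real.exp_le_exp.mpr; linarith
    have hs : (0:ℝ) ≤ (Real.sqrt (2 * Real.pi))⁻¹ := by positivity
    exact mul_le_mul_of_nonneg_left this hs
  calc (b - a) * phi a = ∫ _ in Set.Ioc a b, phi a := by
        rw [setIntegral_const, Real.volume_real_Ioc, max_eq_left (by linarith), smul_eq_mul]
    _ ≤ ∫ x in Set.Ioc a b, phi x := by
        apply setIntegral_mono_on _ (phi_integrableOn' _) measurableSet_Ioc hmono
        exact integrableOn_const measure_Ioc_lt_top.ne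

lemma Phi_lb {s : ℝ} (hs : s ≤ 0) : phi (s - 1) ≤ Φ s := by
  have h := Phi_gap hΦ (show s - 1 ≤ s by linarith) hs
  have h0 := Phi_nonneg hΦ (s - 1)
  have : (s - (s - 1)) = 1 := by ring
  rw [this, one_mul] at h
  linarith

lemma Phi_pos (s : ℝ) : 0 < Φ s := by
  have h1 : phi (min s 0 - 1) ≤ Φ (min s 0) := Phi_lb hΦ (min_le_right s 0)
  have h2 : Φ (min s 0) ≤ Φ s := Phi_mono hΦ (min_le_left s 0)
  have := phi_pos (min s 0 - 1)
  linarith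

lemma Phi_ub {s : ℝ} (hs : s ≤ -1) : Φ s ≤ phi s := by
  rw [Phi_eq hΦ]
  have hbound : ∀ x ∈ Set.Iic s, phi x ≤ phi s * Real.exp (-s) * Real.exp x := by
    intro x hx
    simp only [Set.mem_Iic] at hx
    unfold phi
    rw [mul_assoc, mul_assoc, ← Real.exp_add, ← Real.exp_add]
    have hexp : -x ^ 2 / 2 ≤ -s ^ 2 / 2 + (-s + x) := by nlinarith
    have hsq : (0:ℝ) ≤ (Real.sqrt (2 * Real.pi))⁻¹ := by positivity
    exact mul_le_mul_of_nonneg_left (Real.exp_le_exp.mpr hexp) hsq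
  calc ∫ x in Set.Iic s, phi x ≤ ∫ x in Set.Iic s, phi s * Real.exp (-s) * Real.exp x := by
        apply setIntegral_mono_on (phi_integrableOn' _) _ measurableSet_Iic hbound
        exact ((integrableOn_exp_Iic s).const_mul _)
    _ = phi s * Real.exp (-s) * Real.exp s := by
        rw [MeasureTheory.integral_const_mul, integral_exp_Iic]
    _ = phi s := by rw [mul_assoc, ← Real.exp_add, neg_add_cancel, Real.exp_zero, mul_one]

end Phi

end CeilingAux

/-- The finite-horizon classifier utility ceiling `U*(x) = x · Φ(g(B/x) + Δ)`
is unbounded but subpolynomial: `U*(x) → ∞` as `x → ∞`, yet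
`U*(x)/x^ε → 0` for every `ε > 0`. -/
theorem ceiling_unbounded_subpolynomial (Φ g : ℝ → ℝ)
    (hΦ : ∀ z : ℝ, Φ z = ((gaussianReal 0 1) (Set.Iic z)).toReal)
    (hg : ∀ δ ∈ Set.Ioo (0 : ℝ) 1, Φ (g δ) = δ)
    (B Δ : ℝ) (hB : 0 < B) (hΔ : 0 < Δ)
    (U : ℝ → ℝ) (hU : ∀ x : ℝ, B < x → U x = x * Φ (g (B / x) + Δ)) :
    Filter.Tendsto U Filter.atTop Filter.atTop ∧
      ∀ ε : ℝ, 0 < ε →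
        Filter.Tendsto (fun x : ℝ => U x / x ^ ε) Filter.atTop (nhds 0) := by
  classical
  open CeilingAux Real Filter Set in
  -- basic facts
  have hΦt : ∀ x : ℝ, B < x → Φ (g (B / x)) = B / x := by
    intro x hx
    have hx0 : 0 < x := hB.trans hx
    exact hg _ ⟨div_pos hB hx0, (div_lt_one hx0).mpr hx⟩
  -- `g (B/x) → -∞`
  have ht : Filter.Tendsto (fun x : ℝ => g (B / x)) Filter.atTop Filter.atBot := by
    rw [Filter.tendsto_atBot]
    intro M
    have hM : 0 < Φ M := Phi_pos hΦ M
    filter_upwards [Filter.eventually_gt_atTop (max B (B / Φ M))] with x hx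
    have hxB : B < x := lt_of_le_of_lt (le_max_left _ _) hx
    have hx0 : 0 < x := hB.trans hxB
    by_contra h
    push_neg at h
    have h1 : Φ M ≤ B / x := (hΦt x hxB) ▸ Phi_mono hΦ h.le
    have h2 : B / Φ M < x := lt_of_le_of_lt (le_max_right _ _) hx
    have h3 : B / x < Φ M := by
      rw [div_lt_iff₀ hx0]
      calc B = Φ M * (B / Φ M) := by field_simp
        _ < Φ M * x := by exact mul_lt_mul_of_pos_left h2 hM
    linarith
  constructor
  · -- part (i)
    have hlow : Filter.Tendsto
        (fun x : ℝ => Δ / 2 * B * Real.exp (-(g (B / x) * (Δ / 2)) - (Δ / 2) ^ 2 / 2))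
        Filter.atTop Filter.atTop := by
      have h1 : Filter.Tendsto (fun x : ℝ => -(g (B / x) * (Δ / 2)) - (Δ / 2) ^ 2 / 2)
          Filter.atTop Filter.atTop := by
        have : Filter.Tendsto (fun x : ℝ => g (B / x) * (Δ / 2)) Filter.atTop Filter.atBot :=
          ht.atBot_mul_const (by positivity)
        have hneg : Filter.Tendsto (fun x : ℝ => -(g (B / x) * (Δ / 2)))
            Filter.atTop Filter.atTop := Filter.tendsto_neg_atBot_atTop.comp this
        simpa [sub_eq_add_neg] using
          Filter.tendsto_atTop_add_const_right _ (-((Δ / 2) ^ 2 / 2)) hneg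
      exact (Real.tendsto_exp_atTop.comp h1).const_mul_atTop (by positivity)
    apply Filter.tendsto_atTop_mono' _ _ hlow
    filter_upwards [Filter.eventually_gt_atTop B,
      ht.eventually_le_atBot (min (-1) (-Δ))] with x hxB htx
    set t := g (B / x) with htdef
    have hx0 : 0 < x := hB.trans hxB
    have ht1 : t ≤ -1 := le_trans htx (min_le_left _ _)
    have ht2 : t ≤ -Δ := le_trans htx (min_le_right _ _)
    have hxt : x * Φ t = B := by
      rw [hΦt x hxB]; field_simp
    have hgap : Δ / 2 * phi (t + Δ / 2) ≤ Φ (t + Δ) - Φ (t + Δ / 2) := by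
      have := Phi_gap hΦ (show t + Δ / 2 ≤ t + Δ by linarith) (by linarith)
      calc Δ / 2 * phi (t + Δ / 2) = (t + Δ - (t + Δ / 2)) * phi (t + Δ / 2) := by ring_nf
        _ ≤ _ := this
    have hub : Φ t ≤ phi t := Phi_ub hΦ ht1
    have hnn : 0 ≤ Φ (t + Δ / 2) := Phi_nonneg hΦ _
    have hshift : phi (t + Δ / 2) = phi t * Real.exp (-(t * (Δ / 2)) - (Δ / 2) ^ 2 / 2) :=
      phi_shift t (Δ / 2)
    have hE : 0 < Real.exp (-(t * (Δ / 2)) - (Δ / 2) ^ 2 / 2) := Real.exp_pos _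
    have hxphi : B ≤ x * phi t := by
      calc B = x * Φ t := hxt.symm
        _ ≤ x * phi t := mul_le_mul_of_nonneg_left hub hx0.le
    calc Δ / 2 * B * Real.exp (-(t * (Δ / 2)) - (Δ / 2) ^ 2 / 2)
        ≤ Δ / 2 * (x * phi t) * Real.exp (-(t * (Δ / 2)) - (Δ / 2) ^ 2 / 2) := by
          apply mul_le_mul_of_nonneg_right _ hE.le
          apply mul_le_mul_of_nonneg_left hxphi (by positivity)
      _ = x * (Δ / 2 * phi (t + Δ / 2)) := by rw [hshift]; ring
      _ ≤ x * Φ (t + Δ) := by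
          apply mul_le_mul_of_nonneg_left _ hx0.le
          linarith
      _ = U x := (hU x hxB).symm
  · -- part (ii)
    -- first prove it for exponents in (0, 1]
    have main : ∀ c : ℝ, 0 < c → c ≤ 1 →
        Filter.Tendsto (fun x : ℝ => U x / x ^ c) Filter.atTop (nhds 0) := by
      intro c hc hc1
      set D : ℝ := B * Real.sqrt (2 * Real.pi) with hDdef
      have hD : 0 < D := by positivity
      set q : ℝ → ℝ := fun s => (1 - c) * ((s - 1) ^ 2 / 2) - (s + Δ) ^ 2 / 2 with hqdef
      have hq_tendsto : Filter.Tendsto q Filter.atBot Filter.atBot := by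
        have ha : (0:ℝ) < c / 2 := by linarith
        set b : ℝ := c - 1 - Δ with hbdef
        set e : ℝ := (1 - c - Δ ^ 2) / 2 with hedef
        have hqeq : ∀ s : ℝ, q s = -(c / 2) * (s - b / (2 * (c / 2))) ^ 2
            + (e + b ^ 2 / (4 * (c / 2))) := by
          intro s
          field_simp [hqdef, hbdef, hedef]
          ring
        have h5 : Filter.Tendsto (fun s : ℝ => s - b / (2 * (c / 2)))
            Filter.atBot Filter.atBot := by
          simpa [sub_eq_add_neg] using
            Filter.tendsto_atBot_add_const_right _ (-(b / (2 * (c / 2)))) Filter.tendsto_id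
        have h6 : Filter.Tendsto (fun s : ℝ => (s - b / (2 * (c / 2))) ^ 2)
            Filter.atBot Filter.atTop := by
          simpa [pow_two] using h5.atBot_mul_atBot₀ h5
        have h7 : Filter.Tendsto (fun s : ℝ => -(c / 2) * (s - b / (2 * (c / 2))) ^ 2)
            Filter.atBot Filter.atBot := h6.const_mul_atTop_of_neg (by linarith)
        have h8 := Filter.tendsto_atBot_add_const_right _ (e + b ^ 2 / (4 * (c / 2))) h7
        exact h8.congr fun s => (hqeq s).symm
      have hup : Filter.Tendsto (fun x : ℝ => D ^ (1 - c) * Real.exp (q (g (B / x))))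
          Filter.atTop (nhds 0) := by
        have := (Real.tendsto_exp_atBot.comp (hq_tendsto.comp ht)).const_mul (D ^ (1 - c))
        simpa using this
      apply squeeze_zero' _ _ hup
      · filter_upwards [Filter.eventually_gt_atTop B] with x hxB
        have hx0 : 0 < x := hB.trans hxB
        have := Phi_nonneg hΦ (g (B / x) + Δ)
        rw [hU x hxB]
        positivity
      · filter_upwards [Filter.eventually_gt_atTop B, Filter.eventually_ge_atTop (1:ℝ),
          ht.eventually_le_atBot (-1 - Δ)] with x hxB hx1 htx
        set t := g (B / x) with htdef
        have hx0 : 0 < x := hB.trans hxB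
        have ht0 : t ≤ 0 := by nlinarith
        have htΔ : t + Δ ≤ -1 := by linarith
        have hxt : x * Φ t = B := by rw [hΦt x hxB]; field_simp
        -- upper bound on x
        have hxle : x ≤ D * Real.exp ((t - 1) ^ 2 / 2) := by
          have hlb : phi (t - 1) ≤ Φ t := Phi_lb hΦ ht0
          have h1 : x * phi (t - 1) ≤ B :=
            hxt ▸ mul_le_mul_of_nonneg_left hlb hx0.le
          have hphi : phi (t - 1) = (Real.sqrt (2 * Real.pi))⁻¹
              * Real.exp (-(t - 1) ^ 2 / 2) := rfl
          have hs : (0:ℝ) < Real.sqrt (2 * Real.pi) := by positivity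
          rw [hphi] at h1
          have h2 := mul_le_mul_of_nonneg_right h1
            (le_of_lt (mul_pos hs (Real.exp_pos ((t - 1) ^ 2 / 2))))
          have hid : (Real.sqrt (2 * Real.pi))⁻¹ * Real.exp (-(t - 1) ^ 2 / 2)
              * (Real.sqrt (2 * Real.pi) * Real.exp ((t - 1) ^ 2 / 2)) = 1 := by
            have hz : (-(t - 1) ^ 2 / 2) + ((t - 1) ^ 2 / 2) = 0 := by ring
            rw [mul_mul_mul_comm, inv_mul_cancel₀ hs.ne', ← Real.exp_add, hz,
              Real.exp_zero, one_mul]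
          calc x = x * ((Real.sqrt (2 * Real.pi))⁻¹ * Real.exp (-(t - 1) ^ 2 / 2)
                * (Real.sqrt (2 * Real.pi) * Real.exp ((t - 1) ^ 2 / 2))) := by
                rw [hid, mul_one]
            _ = x * ((Real.sqrt (2 * Real.pi))⁻¹ * Real.exp (-(t - 1) ^ 2 / 2))
                * (Real.sqrt (2 * Real.pi) * Real.exp ((t - 1) ^ 2 / 2)) := by ring
            _ ≤ B * (Real.sqrt (2 * Real.pi) * Real.exp ((t - 1) ^ 2 / 2)) := h2
            _ = D * Real.exp ((t - 1) ^ 2 / 2) := by rw [hDdef]; ring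
        -- upper bound on Φ (t + Δ)
        have hΦub : Φ (t + Δ) ≤ Real.exp (-(t + Δ) ^ 2 / 2) :=
          le_trans (Phi_ub hΦ htΔ) (phi_le_exp _)
        -- combine
        have hxc : (0:ℝ) < x ^ c := Real.rpow_pos_of_pos hx0 c
        have step1 : U x / x ^ c ≤ x ^ (1 - c) * Real.exp (-(t + Δ) ^ 2 / 2) := by
          rw [hU x hxB]
          have h1 : x * Φ (t + Δ) ≤ x * Real.exp (-(t + Δ) ^ 2 / 2) :=
            mul_le_mul_of_nonneg_left hΦub hx0.le
          calc x * Φ (t + Δ) / x ^ c ≤ x * Real.exp (-(t + Δ) ^ 2 / 2) / x ^ c :=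
                div_le_div_of_nonneg_right h1 hxc.le
            _ = x / x ^ c * Real.exp (-(t + Δ) ^ 2 / 2) := by ring
            _ = x ^ (1 - c) * Real.exp (-(t + Δ) ^ 2 / 2) := by
                rw [show x / x ^ c = x ^ (1 - c : ℝ) by
                  rw [Real.rpow_sub hx0, Real.rpow_one]]
        have step2 : x ^ (1 - c) ≤ D ^ (1 - c)
            * Real.exp ((1 - c) * ((t - 1) ^ 2 / 2)) := by
          calc x ^ (1 - c) ≤ (D * Real.exp ((t - 1) ^ 2 / 2)) ^ (1 - c : ℝ) :=
                Real.rpow_le_rpow hx0.le hxle (by linarith)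
            _ = D ^ (1 - c) * (Real.exp ((t - 1) ^ 2 / 2)) ^ (1 - c : ℝ) :=
                Real.mul_rpow hD.le (Real.exp_nonneg _)
            _ = D ^ (1 - c) * Real.exp ((1 - c) * ((t - 1) ^ 2 / 2)) := by
                rw [← Real.exp_mul, mul_comm ((t - 1) ^ 2 / 2) (1 - c)]
        have hE2 : (0:ℝ) ≤ Real.exp (-(t + Δ) ^ 2 / 2) := (Real.exp_pos _).le
        calc U x / x ^ c ≤ x ^ (1 - c) * Real.exp (-(t + Δ) ^ 2 / 2) := step1
          _ ≤ D ^ (1 - c) * Real.exp ((1 - c) * ((t - 1) ^ 2 / 2))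
              * Real.exp (-(t + Δ) ^ 2 / 2) := mul_le_mul_of_nonneg_right step2 hE2
          _ = D ^ (1 - c) * Real.exp (q t) := by
              rw [mul_assoc, ← Real.exp_add, hqdef]
              ring_nf
    intro ε hε
    have hc : 0 < min ε 1 := lt_min hε one_pos
    have hmain := main (min ε 1) hc (min_le_right _ _)
    apply squeeze_zero' _ _ hmain
    · filter_upwards [Filter.eventually_gt_atTop B] with x hxB
      have hx0 : 0 < x := hB.trans hxB
      have := Phi_nonneg hΦ (g (B / x) + Δ)
      rw [hU x hxB]
      positivity
    · filter_upwards [Filter.eventually_gt_atTop B,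
        Filter.eventually_ge_atTop (1:ℝ)] with x hxB hx1
      have hx0 : 0 < x := hB.trans hxB
      have hUnn : 0 ≤ U x := by
        have := Phi_nonneg hΦ (g (B / x) + Δ)
        rw [hU x hxB]; positivity
      have hle : x ^ (min ε 1) ≤ x ^ ε :=
        Real.rpow_le_rpow_of_exponent_le hx1 (min_le_left _ _)
      have hpos : (0:ℝ) < x ^ (min ε 1) := Real.rpow_pos_of_pos hx0 _
      exact div_le_div_of_nonneg_left hUnn hpos hle
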